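/- For any two sequences of positive integers u_1,...,u_m and v_1,...,v_m (with m ≥ 1), one has ∑_{s=1}^m (u_s + log₂ v_s) ≥ 1 + log₂(∑_{s=1}^m u_s v_s). -/

import Mathlib

lemma two_mul_le_two_pow' : ∀ n : ℕ, 1 ≤ n → 2 * n ≤ 2 ^ n := by
  intro n hn
  induction n with
  | zero => omega
  | succ k ih =>
    rcases Nat.eq_or_lt_of_le hn with h | h
    · have hk0 : k = 0 := by omega
      subst hk0; norm_num
    · have hk : 1 ≤ k := by omega
      have h2 : 2 ≤ 2 ^ k := Nat.one_lt_two_pow_iff.mpr (by omega)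
      have := ih hk
      rw [pow_succ]
      omega

lemma key_nat {ι : Type*} (s : Finset ι) (hs : s.Nonempty) (u v : ι → ℕ)
    (hu : ∀ i ∈ s, 0 < u i) (hv : ∀ i ∈ s, 0 < v i) :
    2 * ∑ i ∈ s, u i * v i ≤ 2 ^ (∑ i ∈ s, u i) * ∏ i ∈ s, v i := by
  induction hs using Finset.Nonempty.cons_induction with
  | singleton a =>
    simp only [Finset.sum_singleton, Finset.prod_singleton]
    have h1 := two_mul_le_two_pow' (u a) (hu a (by simp))
    calc 2 * (u a * v a) = (2 * u a) * v a := by ring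
      _ ≤ 2 ^ u a * v a := Nat.mul_le_mul_right _ h1
  | cons a t hat ht ih =>
    simp only [Finset.sum_cons, Finset.prod_cons]
    have ih' := ih (fun i hi => hu i (Finset.mem_cons_of_mem hi))
      (fun i hi => hv i (Finset.mem_cons_of_mem hi))
    have hS : 1 ≤ ∑ i ∈ t, u i * v i := by
      obtain ⟨j, hj⟩ := ht
      have h1 : 0 < u j * v j :=
        Nat.mul_pos (hu j (Finset.mem_cons_of_mem hj)) (hv j (Finset.mem_cons_of_mem hj))
      exact le_trans h1 (Finset.single_le_sum (f := fun i => u i * v i) (fun i _ => Nat.zero_le _) hj)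
    have hva : 1 ≤ v a := hv a (Finset.mem_cons_self a t)
    have hua : u a + 1 ≤ 2 ^ u a := Nat.lt_two_pow_self (n := u a)
    rw [pow_add]
    set S := ∑ i ∈ t, u i * v i
    set A := (2 : ℕ) ^ (∑ i ∈ t, u i)
    set P := ∏ i ∈ t, v i
    calc 2 * (u a * v a + S) ≤ (u a + 1) * v a * (2 * S) := by nlinarith [Nat.mul_le_mul (le_refl (u a * v a)) hS, Nat.mul_le_mul hva hS]
      _ ≤ 2 ^ u a * v a * (A * P) := Nat.mul_le_mul (Nat.mul_le_mul_right _ hua) ih'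
      _ = 2 ^ u a * A * (v a * P) := by ring

/-- For any two sequences of positive integers `u_1,...,u_m` and `v_1,...,v_m` (with `m ≥ 1`),
`∑ (u_s + log₂ v_s) ≥ 1 + log₂ (∑ u_s * v_s)`, where `log₂` is the real base-2 logarithm. -/
theorem sum_add_logb_ge_one_add_logb_sum (m : ℕ) (hm : 1 ≤ m) (u v : Fin m → ℕ)
    (hu : ∀ s, 0 < u s) (hv : ∀ s, 0 < v s) :
    ∑ s, ((u s : ℝ) + Real.logb 2 (v s)) ≥
      1 + Real.logb 2 ((∑ s, u s * v s : ℕ) : ℝ) := by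
  have hne : (Finset.univ : Finset (Fin m)).Nonempty := ⟨⟨0, hm⟩, Finset.mem_univ _⟩
  have hT : 0 < ∑ s, u s * v s :=
    Finset.sum_pos (fun i _ => Nat.mul_pos (hu i) (hv i)) hne
  have key : 2 * ∑ s, u s * v s ≤ 2 ^ (∑ s, u s) * ∏ s, v s :=
    key_nat Finset.univ hne u v (fun i _ => hu i) (fun i _ => hv i)
  have hLHS : ∑ s, ((u s : ℝ) + Real.logb 2 (v s))
      = Real.logb 2 ((2 : ℝ) ^ (∑ s, u s) * ∏ s, (v s : ℝ)) := by
    rw [Real.logb_mul (by positivity)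
        (Finset.prod_ne_zero_iff.mpr fun i _ => by exact_mod_cast (hv i).ne'),
      Real.logb_pow, Real.logb_self_eq_one (by norm_num),
      Real.logb_prod _ _ (fun i _ => by exact_mod_cast (hv i).ne'),
      Finset.sum_add_distrib]
    push_cast
    ring
  have hRHS : 1 + Real.logb 2 ((∑ s, u s * v s : ℕ) : ℝ)
      = Real.logb 2 (2 * ((∑ s, u s * v s : ℕ) : ℝ)) := by
    rw [Real.logb_mul (by norm_num) (by exact_mod_cast hT.ne'),
      Real.logb_self_eq_one (by norm_num)]
  rw [hLHS, hRHS]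
  apply Real.logb_le_logb_of_le (by norm_num)
  · positivity
  · push_cast
    exact_mod_cast key
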